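/- Let W̄_j ⊆ W_j ⊆ W be subsets of the row index set and X_j ⊆ X a subset of the external column index set, and let L = |W|. Then: (i) rank(T_{W̄_j, X_j}) = |W̄_j| if and only if F(W̄_j, X_j) has full row rank L; and (ii) rank(T_{W_j, X_j}) = rank(T_{W̄_j, X_j}) + rank(T_{(W_j ∖ W̄_j), X_j}) if and only if rank(F(W_j, X_j)) = rank(F(W̄_j, X_j)) + rank(F(W_j ∖ W̄_j, X_j)) − L. -/

import Mathlib

section Aux

open Matrix LinearMap Module

variable {R : Type*} [Field R]

/-- A submodule product is linearly equivalent to the product of submodules. -/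
def subProdEquiv {M N : Type*} [AddCommGroup M] [AddCommGroup N] [Module R M] [Module R N]
    (p : Submodule R M) (q : Submodule R N) : ↥(p.prod q) ≃ₗ[R] ↥p × ↥q where
  toFun x := (⟨(x : M × N).1, x.2.1⟩, ⟨(x : M × N).2, x.2.2⟩)
  invFun y := ⟨(y.1, y.2), ⟨y.1.2, y.2.2⟩⟩
  left_inv _ := rfl
  right_inv _ := rfl
  map_add' _ _ := rfl
  map_smul' _ _ := rfl

lemma finrank_prod_sub {M N : Type*} [AddCommGroup M] [AddCommGroup N] [Module R M] [Module R N]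
    [FiniteDimensional R M] [FiniteDimensional R N]
    (p : Submodule R M) (q : Submodule R N) :
    finrank R ↥(p.prod q) = finrank R ↥p + finrank R ↥q := by
  rw [(subProdEquiv p q).finrank_eq, Module.finrank_prod]

lemma range_prodMap' {M N M' N' : Type*} [AddCommGroup M] [AddCommGroup N]
    [AddCommGroup M'] [AddCommGroup N'] [Module R M] [Module R N] [Module R M'] [Module R N']
    (f : M →ₗ[R] M') (g : N →ₗ[R] N') :
    range (f.prodMap g) = (range f).prod (range g) := by
  ext ⟨y₁, y₂⟩
  simp only [LinearMap.mem_range, Submodule.mem_prod, LinearMap.prodMap_apply, Prod.mk.injEq]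
  constructor
  · rintro ⟨⟨x₁, x₂⟩, h1, h2⟩; exact ⟨⟨x₁, h1⟩, ⟨x₂, h2⟩⟩
  · rintro ⟨⟨x₁, h1⟩, ⟨x₂, h2⟩⟩; exact ⟨(x₁, x₂), h1, h2⟩

variable {m₁ m₂ n₁ n₂ : Type*} [Fintype m₁] [Fintype m₂] [Fintype n₁] [Fintype n₂]

lemma rank_fromBlocks_diag (A : Matrix m₁ n₁ R) (D : Matrix m₂ n₂ R) :
    (Matrix.fromBlocks A 0 0 D).rank = A.rank + D.rank := by
  have h : (Matrix.fromBlocks A 0 0 D).mulVecLin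
      = ((LinearEquiv.sumArrowLequivProdArrow m₁ m₂ R R).symm :
            ((m₁ → R) × (m₂ → R)) →ₗ[R] (m₁ ⊕ m₂ → R)) ∘ₗ
        (A.mulVecLin.prodMap D.mulVecLin) ∘ₗ
        ((LinearEquiv.sumArrowLequivProdArrow n₁ n₂ R R) :
            (n₁ ⊕ n₂ → R) →ₗ[R] ((n₁ → R) × (n₂ → R))) := by
    ext x i
    cases i <;>
      simp [Matrix.fromBlocks_mulVec, LinearEquiv.sumArrowLequivProdArrow,
        Equiv.sumArrowEquivProdArrow]
  rw [Matrix.rank, h, LinearMap.range_comp, LinearMap.range_comp_of_range_eq_top _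
      (LinearMap.range_eq_top.mpr (LinearEquiv.sumArrowLequivProdArrow n₁ n₂ R R).surjective),
    LinearEquiv.finrank_map_eq, range_prodMap', finrank_prod_sub]
  rfl

lemma rank_reindex' {m m' n n' : Type*} [Fintype m] [Fintype m'] [Fintype n] [Fintype n']
    (e₁ : m ≃ m') (e₂ : n ≃ n') (A : Matrix m n R) :
    (Matrix.reindex e₁ e₂ A).rank = A.rank := by
  rw [Matrix.rank, Matrix.rank, Matrix.mulVecLin_reindex, LinearMap.range_comp,
    LinearMap.range_comp, LinearEquiv.range, Submodule.map_top, LinearEquiv.finrank_map_eq]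

end Aux

/-- The submatrix `T_{A, X'}` of `T = (I - G)⁻¹ * X̄` with rows indexed by the
subset `A ⊆ W` and columns indexed by the subset `X' ⊆ X`. -/
noncomputable def Tsub {F : Type*} [Field F] {W X : Type*} [Fintype W] [Fintype X]
    [DecidableEq W]
    (G : Matrix W W F) (Xb : Matrix W X F) (A : Finset W) (X' : Finset X) :
    Matrix ↥A ↥X' F :=
  ((1 - G)⁻¹ * Xb).submatrix (fun i : ↥A => (i : W)) (fun j : ↥X' => (j : X))

/-- The matrix `F(A, X')` whose left block consists of the columns of `G - I`
indexed by `W ∖ A` and whose right block consists of the columns of `X̄`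
indexed by `X'`. -/
noncomputable def Fmat {F : Type*} [Field F] {W X : Type*} [Fintype W] [Fintype X]
    [DecidableEq W]
    (G : Matrix W W F) (Xb : Matrix W X F) (A : Finset W) (X' : Finset X) :
    Matrix W (↥(Aᶜ) ⊕ ↥X') F :=
  Matrix.fromCols ((G - 1).submatrix id (fun j : ↥(Aᶜ) => (j : W)))
    (Xb.submatrix id (fun j : ↥X' => (j : X)))

lemma key_rank {F : Type*} [Field F] {W X : Type*} [Fintype W] [Fintype X]
    [DecidableEq W] [DecidableEq X]
    (G : Matrix W W F) (Xb : Matrix W X F) (hG : IsUnit (1 - G))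
    (A : Finset W) (X' : Finset X) :
    (Fmat G Xb A X').rank = (Aᶜ : Finset W).card + (Tsub G Xb A X').rank := by
  classical
  have hdet : IsUnit (1 - G).det := (Matrix.isUnit_iff_isUnit_det _).mp hG
  have hdet' : IsUnit (1 - G)⁻¹.det := Matrix.isUnit_nonsing_inv_det _ hdet
  have h1 : (Fmat G Xb A X').rank = ((1 - G)⁻¹ * Fmat G Xb A X').rank :=
    (Matrix.rank_mul_eq_right_of_isUnit_det _ _ hdet').symm
  set T : Matrix W X F := (1 - G)⁻¹ * Xb with hT
  have hinv : (1 - G)⁻¹ * (G - 1) = -1 := by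
    rw [show G - 1 = -(1 - G) from (neg_sub 1 G).symm, Matrix.mul_neg,
      Matrix.nonsing_inv_mul _ hdet]
  have h2 : (1 - G)⁻¹ * Fmat G Xb A X' =
      Matrix.fromCols ((-1 : Matrix W W F).submatrix id (fun j : ↥(Aᶜ) => (j : W)))
        (T.submatrix id (fun j : ↥X' => (j : X))) := by
    rw [Fmat, Matrix.mul_fromCols, ← hinv]
    congr 1 <;> ext i j <;> simp [Matrix.mul_apply, Matrix.submatrix_apply]
  set Q : Matrix ↥(Aᶜ) ↥X' F :=
    T.submatrix (fun i : ↥(Aᶜ) => (i : W)) (fun j : ↥X' => (j : X)) with hQ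
  set S : Matrix ↥A ↥X' F := Tsub G Xb A X' with hS
  let e : ↥(Aᶜ) ⊕ ↥A ≃ W :=
    (((Equiv.subtypeEquivRight (fun x => Finset.mem_compl) : ↥(Aᶜ) ≃ {x // x ∉ A}).sumCongr
        (Equiv.refl ↥A)).trans ((Equiv.sumComm _ _).trans (Equiv.sumCompl (· ∈ A))))
  have h3 : ((1 - G)⁻¹ * Fmat G Xb A X').submatrix e _root_.id =
      Matrix.fromBlocks (-1 : Matrix ↥(Aᶜ) ↥(Aᶜ) F) Q 0 S := by
    rw [h2]
    ext i j
    have he₁ : ∀ i : ↥(Aᶜ), e (Sum.inl i) = (i : W) := fun i => rfl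
    have he₂ : ∀ i : ↥A, e (Sum.inr i) = (i : W) := fun i => rfl
    cases i with
    | inl i =>
      cases j with
      | inl j =>
        simp only [id_eq, Matrix.submatrix_apply, he₁, Matrix.fromCols_apply_inl,
          Matrix.fromBlocks_apply₁₁]
        by_cases h : i = j
        · subst h; simp
        · rw [Matrix.neg_apply, Matrix.neg_apply,
            Matrix.one_apply_ne (fun hc => h (Subtype.ext hc)), Matrix.one_apply_ne h]
      | inr j => rfl
    | inr i =>
      cases j with
      | inl j =>
        have hne : (i : W) ≠ (j : W) := by
          intro hij
          have hj : (j : W) ∈ Aᶜ := j.2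
          rw [← hij, Finset.mem_compl] at hj
          exact hj i.2
        simp only [id_eq, Matrix.submatrix_apply, he₂, Matrix.fromCols_apply_inl,
          Matrix.fromBlocks_apply₂₁, Matrix.neg_apply, Matrix.one_apply, if_neg hne,
          Matrix.zero_apply, neg_zero]
      | inr j => rfl
  have h4 : ((1 - G)⁻¹ * Fmat G Xb A X').rank =
      (Matrix.fromBlocks (-1 : Matrix ↥(Aᶜ) ↥(Aᶜ) F) Q 0 S).rank := by
    rw [← h3, show ((1 - G)⁻¹ * Fmat G Xb A X').submatrix e _root_.id
        = Matrix.reindex e.symm (Equiv.refl _) ((1 - G)⁻¹ * Fmat G Xb A X') from rfl,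
      rank_reindex']
  have h5 : Matrix.fromBlocks (-1 : Matrix ↥(Aᶜ) ↥(Aᶜ) F) Q 0 S =
      (Matrix.fromBlocks (-1 : Matrix ↥(Aᶜ) ↥(Aᶜ) F) 0 0 S : Matrix (↥(Aᶜ) ⊕ ↥A) (↥(Aᶜ) ⊕ ↥X') F) *
        (Matrix.fromBlocks 1 (-Q) 0 1 : Matrix (↥(Aᶜ) ⊕ ↥X') (↥(Aᶜ) ⊕ ↥X') F) := by
    rw [Matrix.fromBlocks_multiply]
    congr 1 <;> simp
  have hU : IsUnit (Matrix.fromBlocks (1 : Matrix ↥(Aᶜ) ↥(Aᶜ) F) (-Q) 0 1).det := by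
    rw [Matrix.det_fromBlocks_zero₂₁]; simp
  have h6 : (Matrix.fromBlocks (-1 : Matrix ↥(Aᶜ) ↥(Aᶜ) F) Q 0 S).rank =
      (Matrix.fromBlocks (-1 : Matrix ↥(Aᶜ) ↥(Aᶜ) F) 0 0 S).rank := by
    rw [h5]; exact Matrix.rank_mul_eq_left_of_isUnit_det _ _ hU
  have h7 : (-1 : Matrix ↥(Aᶜ) ↥(Aᶜ) F).rank = Fintype.card ↥(Aᶜ) :=
    Matrix.rank_of_isUnit _ (IsUnit.neg isUnit_one)
  rw [h1, h4, h6, rank_fromBlocks_diag, h7, Fintype.card_coe]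

theorem stmt4 {F : Type*} [Field F] {W X : Type*} [Fintype W] [Fintype X]
    [DecidableEq W] [DecidableEq X]
    (G : Matrix W W F) (Xb : Matrix W X F)
    (hG : IsUnit (1 - G))
    (Wj Wbj : Finset W) (Xj : Finset X) (hsub : Wbj ⊆ Wj) :
    ((Tsub G Xb Wbj Xj).rank = Wbj.card ↔
        (Fmat G Xb Wbj Xj).rank = Fintype.card W) ∧
    ((Tsub G Xb Wj Xj).rank
        = (Tsub G Xb Wbj Xj).rank + (Tsub G Xb (Wj \ Wbj) Xj).rank ↔
      ((Fmat G Xb Wj Xj).rank : ℤ)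
        = ((Fmat G Xb Wbj Xj).rank : ℤ) + ((Fmat G Xb (Wj \ Wbj) Xj).rank : ℤ)
          - (Fintype.card W : ℤ)) := by
  have k1 := key_rank G Xb hG Wbj Xj
  have k2 := key_rank G Xb hG Wj Xj
  have k3 := key_rank G Xb hG (Wj \ Wbj) Xj
  have tle : ∀ A : Finset W, (Tsub G Xb A Xj).rank ≤ A.card := fun A => by
    simpa [Fintype.card_coe] using Matrix.rank_le_card_height (Tsub G Xb A Xj)
  have t1 := tle Wbj
  have t2 := tle Wj
  have t3 := tle (Wj \ Wbj)
  have c1 : (Wbjᶜ : Finset W).card = Fintype.card W - Wbj.card := Finset.card_compl _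
  have c2 : (Wjᶜ : Finset W).card = Fintype.card W - Wj.card := Finset.card_compl _
  have c3 : ((Wj \ Wbj)ᶜ : Finset W).card = Fintype.card W - (Wj \ Wbj).card :=
    Finset.card_compl _
  have l1 : Wbj.card ≤ Fintype.card W := Wbj.card_le_univ
  have l2 : Wj.card ≤ Fintype.card W := Wj.card_le_univ
  have l3 : (Wj \ Wbj).card ≤ Fintype.card W := (Wj \ Wbj).card_le_univ
  have hsd : (Wj \ Wbj).card + Wbj.card = Wj.card := Finset.card_sdiff_add_card_eq_card hsub
  constructor
  · rw [k1]; omega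
  · rw [k2, k1, k3]; push_cast; omega
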